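/- Let C and (T, D, X) satisfy C ⟂ (T, D, X) | Z for a discrete Z, let G(s|z) = P(C > s | Z = z) with G(t-|z) > 0, and let f be a bounded measurable function of (T, D, X, Z). Define W = 1{C ≥ T∧t}/G((T∧t)-|Z) and T̃ = T ∧ C. Then for every s < t with P(T̃ > s, Z = z) > 0: E( f(T,D,X,Z)·W | T̃ > s, Z = z ) = E( f(T,D,X,Z) | T > s, Z = z ) / G(s | z). -/

import Mathlib

open MeasureTheory ProbabilityTheory Set

/-- Under `C ⟂ (T,D,X) | Z` with `G(t-|z) > 0`, for bounded measurable
`f` of `(T,D,X,Z)` and `s < t` with `P(T̃ > s, Z = z) > 0` (where `T̃ = T ∧ C`),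
`E(f·W | T̃ > s, Z = z) = E(f | T > s, Z = z)/G(s|z)`,
where `W = 1{C ≥ T∧t}/G((T∧t)-|Z)`. Conditional quantities given `Z = z` are expressed
under the conditional measure `μ[|Z⁻¹'{z}]`. -/
theorem ipcw_conditional_expectation_identity
    {Ω E F' ι : Type*} [MeasurableSpace Ω] [MeasurableSpace E] [MeasurableSpace F']
    [MeasurableSpace ι] [MeasurableSingletonClass ι]
    (μ : Measure Ω) [IsProbabilityMeasure μ]
    (C T : Ω → ℝ) (D : Ω → E) (X : Ω → F') (Z : Ω → ι)
    (hC : Measurable C) (hT : Measurable T) (hD : Measurable D)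
    (hX : Measurable X) (hZ : Measurable Z)
    (hCpos : ∀ ω, 0 < C ω) (hTpos : ∀ ω, 0 < T ω)
    (t : ℝ) (ht : 0 < t) (z : ι) (hz : 0 < μ (Z ⁻¹' {z}))
    (Ff : ℝ × E × F' × ι → ℝ) (hFmeas : Measurable Ff)
    (Mb : ℝ) (hFbd : ∀ x, |Ff x| ≤ Mb)
    (hindep : IndepFun C (fun ω => (T ω, D ω, X ω)) (μ[|Z ⁻¹' {z}]))
    (hpos : 0 < (μ[|Z ⁻¹' {z}]) {ω | t ≤ C ω})
    (s : ℝ) (hs : s < t)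
    (hTs : 0 < (μ[|Z ⁻¹' {z}]) {ω | s < min (T ω) (C ω)}) :
    (∫ ω in {ω | s < min (T ω) (C ω)},
        Ff (T ω, D ω, X ω, Z ω) *
          ((if min (T ω) t ≤ C ω then (1 : ℝ) else 0) /
            ((μ[|Z ⁻¹' {Z ω}]) {ω' | min (T ω) t ≤ C ω'}).toReal)
        ∂(μ[|Z ⁻¹' {z}]))
      / ((μ[|Z ⁻¹' {z}]) {ω | s < min (T ω) (C ω)}).toReal
    = (∫ ω in {ω | s < T ω}, Ff (T ω, D ω, X ω, Z ω) ∂(μ[|Z ⁻¹' {z}]))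
        / (((μ[|Z ⁻¹' {z}]) {ω | s < T ω}).toReal *
           ((μ[|Z ⁻¹' {z}]) {ω | s < C ω}).toReal) := by
  set ν := μ[|Z ⁻¹' {z}] with hνdef
  have hzmeas : MeasurableSet (Z ⁻¹' {z}) := hZ (measurableSet_singleton z)
  have hzne : μ (Z ⁻¹' {z}) ≠ 0 := hz.ne'
  haveI hprob : IsProbabilityMeasure ν := cond_isProbabilityMeasure hzne
  -- a.e. Z = z
  have haez : ∀ᵐ ω ∂ν, Z ω = z := by
    rw [ae_iff]
    have hset : {ω | ¬ Z ω = z} = (Z ⁻¹' {z})ᶜ := by ext ω; simp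
    rw [hset, hνdef, cond_apply hzmeas]
    simp
  set Wf : Ω → ℝ × E × F' := fun ω => (T ω, D ω, X ω) with hWdef
  have hW : Measurable Wf := hT.prodMk (hD.prodMk hX)
  set Gr : ℝ → ℝ := fun u => (ν {ω | u ≤ C ω}).toReal with hGrdef
  have hGranti : Antitone Gr := by
    intro a b hab
    exact ENNReal.toReal_mono (measure_ne_top _ _)
      (measure_mono (fun ω hω => le_trans hab hω))
  have hGrmeas : Measurable Gr := hGranti.measurable
  have hGrpos : ∀ u, u ≤ t → 0 < Gr u := by
    intro u hu
    apply ENNReal.toReal_pos _ (measure_ne_top _ _)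
    refine (lt_of_lt_of_le hpos (measure_mono fun ω hω => le_trans hu hω)).ne'
  have hOmne : Nonempty Ω := by
    by_contra h
    rw [not_nonempty_iff] at h
    have h1 : μ Set.univ = 1 := measure_univ
    rw [Set.univ_eq_empty_iff.mpr h, measure_empty] at h1
    exact zero_ne_one h1
  obtain ⟨ω0⟩ := hOmne
  have hMb0 : 0 ≤ Mb := le_trans (abs_nonneg _) (hFbd (T ω0, D ω0, X ω0, Z ω0))
  -- the kernel function on (ℝ × E × F') × ℝ
  set φ : (ℝ × E × F') × ℝ → ℝ := fun p =>
    (if s < p.1.1 then Ff (p.1.1, p.1.2.1, p.1.2.2, z) else 0) *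
      ((if min p.1.1 t ≤ p.2 then (1 : ℝ) else 0) / Gr (min p.1.1 t)) with hphidef
  have hphimeas : Measurable φ := by
    apply Measurable.mul
    · apply Measurable.ite
      · exact measurableSet_lt measurable_const measurable_fst.fst
      · exact hFmeas.comp ((measurable_fst.fst).prodMk
          ((measurable_fst.snd.fst).prodMk
            ((measurable_fst.snd.snd).prodMk measurable_const)))
      · exact measurable_const
    · apply Measurable.div
      · apply Measurable.ite _ measurable_const measurable_const
        exact measurableSet_le (measurable_fst.fst.min measurable_const) measurable_snd
      · exact hGrmeas.comp (measurable_fst.fst.min measurable_const)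
  have hphibd : ∀ p, |φ p| ≤ Mb / Gr t := by
    intro p
    rw [hphidef, abs_mul]
    have h1 : |if s < p.1.1 then Ff (p.1.1, p.1.2.1, p.1.2.2, z) else 0| ≤ Mb := by
      split
      · exact hFbd _
      · simpa using hMb0
    have hGt : 0 < Gr t := hGrpos t le_rfl
    have hGu : 0 < Gr (min p.1.1 t) := hGrpos _ (min_le_right _ _)
    have h2 : |(if min p.1.1 t ≤ p.2 then (1 : ℝ) else 0) / Gr (min p.1.1 t)| ≤ 1 / Gr t := by
      rw [abs_div, abs_of_pos hGu]
      apply div_le_div₀ _ _ hGt (hGranti (min_le_right _ _))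
      · positivity
      · split <;> simp [abs_of_nonneg, zero_le_one]
    calc |if s < p.1.1 then Ff (p.1.1, p.1.2.1, p.1.2.2, z) else 0| *
        |(if min p.1.1 t ≤ p.2 then (1 : ℝ) else 0) / Gr (min p.1.1 t)|
        ≤ Mb * (1 / Gr t) := mul_le_mul h1 h2 (abs_nonneg _) hMb0
      _ = Mb / Gr t := by ring
  -- measures
  have hmapW : IsProbabilityMeasure (ν.map Wf) := Measure.isProbabilityMeasure_map hW.aemeasurable
  have hmapC : IsProbabilityMeasure (ν.map C) := Measure.isProbabilityMeasure_map hC.aemeasurable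
  have hprod : ν.map (fun ω => (Wf ω, C ω)) = (ν.map Wf).prod (ν.map C) :=
    (indepFun_iff_map_prod_eq_prod_map_map hW.aemeasurable hC.aemeasurable).mp hindep.symm
  -- numerator identity
  have hSmeas : MeasurableSet {ω | s < min (T ω) (C ω)} :=
    measurableSet_lt measurable_const (hT.min hC)
  have hnum : (∫ ω in {ω | s < min (T ω) (C ω)},
        Ff (T ω, D ω, X ω, Z ω) *
          ((if min (T ω) t ≤ C ω then (1 : ℝ) else 0) /
            ((μ[|Z ⁻¹' {Z ω}]) {ω' | min (T ω) t ≤ C ω'}).toReal) ∂ν)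
      = ∫ ω in {ω | s < T ω}, Ff (T ω, D ω, X ω, Z ω) ∂ν := by
    rw [← integral_indicator hSmeas]
    have hstep1 : (Set.indicator {ω | s < min (T ω) (C ω)}
        (fun ω => Ff (T ω, D ω, X ω, Z ω) *
          ((if min (T ω) t ≤ C ω then (1 : ℝ) else 0) /
            ((μ[|Z ⁻¹' {Z ω}]) {ω' | min (T ω) t ≤ C ω'}).toReal)))
        =ᵐ[ν] fun ω => φ (Wf ω, C ω) := by
      filter_upwards [haez] with ω hωz
      rw [hphidef]
      by_cases hind : min (T ω) t ≤ C ω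
      · by_cases hsT : s < T ω
        · have hmem : ω ∈ {ω | s < min (T ω) (C ω)} := by
            simp only [Set.mem_setOf_eq, lt_min_iff]
            exact ⟨hsT, lt_of_lt_of_le (lt_min hsT hs) hind⟩
          rw [Set.indicator_of_mem hmem]
          simp only [hωz, hGrdef, hνdef, if_pos hind, if_pos hsT, hWdef]
        · have hmem : ω ∉ {ω | s < min (T ω) (C ω)} := by
            simp only [Set.mem_setOf_eq, lt_min_iff, not_and_or]
            exact Or.inl hsT
          rw [Set.indicator_of_notMem hmem]
          simp only [hWdef, if_neg hsT, zero_mul]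
      · by_cases hmem : ω ∈ {ω | s < min (T ω) (C ω)}
        · rw [Set.indicator_of_mem hmem, hωz]
          simp only [hWdef, if_neg hind]
          simp
        · rw [Set.indicator_of_notMem hmem]
          simp only [hWdef, if_neg hind]
          simp
    rw [integral_congr_ae hstep1]
    -- pass to the product measure
    have hpairmeas : AEMeasurable (fun ω => (Wf ω, C ω)) ν := (hW.prodMk hC).aemeasurable
    rw [← integral_map hpairmeas hphimeas.aestronglyMeasurable, hprod]
    have hint : Integrable φ ((ν.map Wf).prod (ν.map C)) := by
      refine Integrable.mono' (integrable_const (Mb / Gr t))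
        hphimeas.aestronglyMeasurable (ae_of_all _ fun p => ?_)
      simpa using hphibd p
    rw [integral_prod φ hint]
    have hinner : ∀ w : ℝ × E × F',
        (∫ c, φ (w, c) ∂(ν.map C)) = if s < w.1 then Ff (w.1, w.2.1, w.2.2, z) else 0 := by
      intro w
      have heq : (fun c => φ (w, c)) = fun c =>
          ((if s < w.1 then Ff (w.1, w.2.1, w.2.2, z) else 0) / Gr (min w.1 t)) *
            Set.indicator (Set.Ici (min w.1 t)) (fun _ => (1:ℝ)) c := by
        funext c
        simp only [hphidef, Set.indicator_apply, Set.mem_Ici]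
        by_cases hc : min w.1 t ≤ c
        · simp only [if_pos hc]; ring
        · simp only [if_neg hc]; ring
      rw [heq, integral_const_mul, integral_indicator_const _ measurableSet_Ici,
        measureReal_def, Measure.map_apply hC measurableSet_Ici]
      have hmC : (ν (C ⁻¹' Set.Ici (min w.1 t))).toReal = Gr (min w.1 t) := rfl
      rw [smul_eq_mul, mul_one, hmC]
      have hGu : Gr (min w.1 t) ≠ 0 := (hGrpos _ (min_le_right _ _)).ne'
      field_simp
    simp only [hinner]
    -- back to ν
    rw [integral_map hW.aemeasurable]
    · rw [← integral_indicator (measurableSet_lt measurable_const hT)]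
      apply integral_congr_ae
      filter_upwards [haez] with ω hωz
      simp only [hWdef, Set.indicator_apply, Set.mem_setOf_eq, hωz]
    · apply Measurable.aestronglyMeasurable
      apply Measurable.ite (measurableSet_lt measurable_const measurable_fst)
      · exact hFmeas.comp (measurable_fst.prodMk
          ((measurable_snd.fst).prodMk ((measurable_snd.snd).prodMk measurable_const)))
      · exact measurable_const
  -- denominator identity
  have hTCindep : IndepFun T C ν := by
    have h := (hindep.comp measurable_id measurable_fst).symm
    exact h
  have hdenom : ν {ω | s < min (T ω) (C ω)} = ν {ω | s < T ω} * ν {ω | s < C ω} := by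
    have hset : {ω | s < min (T ω) (C ω)} = T ⁻¹' Set.Ioi s ∩ C ⁻¹' Set.Ioi s := by
      ext ω; simp [lt_min_iff]
    rw [hset, hTCindep.measure_inter_preimage_eq_mul _ _ measurableSet_Ioi measurableSet_Ioi]
    rfl
  rw [hnum, hdenom, ENNReal.toReal_mul]
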